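/- Assume H^{2,0} ≠ 0 and that the t-invariant part of the center of H is trivial: {a ∈ H : ab = ba for all b ∈ H, and t(a) = a} = ℚ·1. Then H_ℂ = W ⊕ σ(W). -/

import Mathlib

open scoped TensorProduct

noncomputable section

/-- Complex conjugation on `ℂ` as a `ℚ`-algebra homomorphism. -/
def conjQAlg : ℂ →ₐ[ℚ] ℂ := (Complex.conjAe.restrictScalars ℚ).toAlgHom

variable (H : Type) [Ring H] [Algebra ℚ H] [FiniteDimensional ℚ H]

/-- The conjugate-linear involution of `H_ℂ = ℂ ⊗[ℚ] H` fixing `H`. -/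
def sigmaC : ℂ ⊗[ℚ] H →ₗ[ℚ] ℂ ⊗[ℚ] H :=
  (Algebra.TensorProduct.map conjQAlg (AlgHom.id ℚ H)).toLinearMap

/-- The inclusion of `H` into `H_ℂ = ℂ ⊗[ℚ] H`. -/
def inclH : H →ₐ[ℚ] ℂ ⊗[ℚ] H := Algebra.TensorProduct.includeRight

/-- The data of a polarized weight 2 Hodge structure on a finite-dimensional `ℚ`-algebra `H`,
compatible with the ring structure:
(i) a Hodge decomposition `H_ℂ = H^{2,0} ⊕ H^{1,1} ⊕ H^{0,2}` with `σ(H^{2,0}) = H^{0,2}`,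
`σ(H^{1,1}) = H^{1,1}`;
(ii) a polarization: a symmetric `ℚ`-bilinear form `B` on `H` with `ℂ`-bilinear extension `BC`
to `H_ℂ`, whose associated Hermitian pairing `h(α,β) := BC α (σ β)` makes the Hodge pieces
pairwise orthogonal and is positive definite on `H^{2,0}`, `H^{0,2}` and negative definite on
`H^{1,1}`;
(iii) the product is a morphism of Hodge structures of bidegree `(-1,-1)`:
`H^{p,q}·H^{p',q'} ⊆ H^{p+p'-1,q+q'-1}`;
(iv) an adjunction `t`: a `ℚ`-linear involution with `t(ab) = t(b)t(a)`,
`⟨ab,c⟩ = ⟨b, t(a)c⟩` and `⟨ab,c⟩ = ⟨a, c·t(b)⟩`. -/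
structure HodgeAlgebraData where
  H20 : Submodule ℂ (ℂ ⊗[ℚ] H)
  H11 : Submodule ℂ (ℂ ⊗[ℚ] H)
  H02 : Submodule ℂ (ℂ ⊗[ℚ] H)
  sup_top : H20 ⊔ H11 ⊔ H02 = ⊤
  disj1 : H20 ⊓ (H11 ⊔ H02) = ⊥
  disj2 : H11 ⊓ H02 = ⊥
  sigma_20 : ∀ x ∈ H20, sigmaC H x ∈ H02
  sigma_02 : ∀ x ∈ H02, sigmaC H x ∈ H20
  sigma_11 : ∀ x ∈ H11, sigmaC H x ∈ H11
  B : H →ₗ[ℚ] H →ₗ[ℚ] ℚ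
  B_symm : ∀ a b : H, B a b = B b a
  BC : (ℂ ⊗[ℚ] H) →ₗ[ℂ] (ℂ ⊗[ℚ] H) →ₗ[ℂ] ℂ
  BC_extends : ∀ a b : H, BC (inclH H a) (inclH H b) = (B a b : ℂ)
  BC_symm : ∀ x y, BC x y = BC y x
  BC_conj : ∀ x y, BC (sigmaC H x) (sigmaC H y) = starRingEnd ℂ (BC x y)
  orth_20_11 : ∀ x ∈ H20, ∀ y ∈ H11, BC x (sigmaC H y) = 0
  orth_20_02 : ∀ x ∈ H20, ∀ y ∈ H02, BC x (sigmaC H y) = 0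
  orth_11_02 : ∀ x ∈ H11, ∀ y ∈ H02, BC x (sigmaC H y) = 0
  pos_20 : ∀ x ∈ H20, x ≠ 0 → 0 < (BC x (sigmaC H x)).re ∧ (BC x (sigmaC H x)).im = 0
  pos_02 : ∀ x ∈ H02, x ≠ 0 → 0 < (BC x (sigmaC H x)).re ∧ (BC x (sigmaC H x)).im = 0
  neg_11 : ∀ x ∈ H11, x ≠ 0 → (BC x (sigmaC H x)).re < 0 ∧ (BC x (sigmaC H x)).im = 0
  mul_20_20 : ∀ x ∈ H20, ∀ y ∈ H20, x * y = 0
  mul_20_11 : ∀ x ∈ H20, ∀ y ∈ H11, x * y ∈ H20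
  mul_11_20 : ∀ x ∈ H11, ∀ y ∈ H20, x * y ∈ H20
  mul_11_11 : ∀ x ∈ H11, ∀ y ∈ H11, x * y ∈ H11
  mul_20_02 : ∀ x ∈ H20, ∀ y ∈ H02, x * y ∈ H11
  mul_02_20 : ∀ x ∈ H02, ∀ y ∈ H20, x * y ∈ H11
  mul_02_02 : ∀ x ∈ H02, ∀ y ∈ H02, x * y = 0
  mul_11_02 : ∀ x ∈ H11, ∀ y ∈ H02, x * y ∈ H02
  mul_02_11 : ∀ x ∈ H02, ∀ y ∈ H11, x * y ∈ H02
  t : H →ₗ[ℚ] H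
  t_invol : ∀ a : H, t (t a) = a
  t_mul : ∀ a b : H, t (a * b) = t b * t a
  adj_left : ∀ a b c : H, B (a * b) c = B b (t a * c)
  adj_right : ∀ a b c : H, B (a * b) c = B a (c * t b)

variable {H}

/-- `W := H^{2,0}·H_ℂ`, the `ℂ`-linear span of all products `x·y` with `x ∈ H^{2,0}`,
`y ∈ H_ℂ`. -/
def HodgeAlgebraData.W (D : HodgeAlgebraData H) : Submodule ℂ (ℂ ⊗[ℚ] H) := D.H20 * ⊤

/-- `σ(W)`, the image of `W` under the conjugation `σ`, as a `ℚ`-subspace of `H_ℂ`. -/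
def HodgeAlgebraData.sigmaW (D : HodgeAlgebraData H) : Submodule ℚ (ℂ ⊗[ℚ] H) :=
  (D.W.restrictScalars ℚ).map (sigmaC H)

/-- The `ℂ`-linear extension of `t` to `H_ℂ`. -/
def HodgeAlgebraData.tC (D : HodgeAlgebraData H) : ℂ ⊗[ℚ] H →ₗ[ℂ] ℂ ⊗[ℚ] H :=
  LinearMap.baseChange ℂ D.t


namespace HodgeAlgebraData
section
set_option linter.unusedSectionVars false
variable {H : Type} [Ring H] [Algebra ℚ H] [FiniteDimensional ℚ H]

lemma sig_tmul (z : ℂ) (a : H) : sigmaC H (z ⊗ₜ[ℚ] a) = (starRingEnd ℂ z) ⊗ₜ[ℚ] a := rfl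

lemma tmul_eq_smul (z : ℂ) (a : H) : (z ⊗ₜ[ℚ] a : ℂ ⊗[ℚ] H) = z • ((1:ℂ) ⊗ₜ[ℚ] a) := by
  rw [TensorProduct.smul_tmul', smul_eq_mul, mul_one]

lemma sig_mul (x y : ℂ ⊗[ℚ] H) : sigmaC H (x * y) = sigmaC H x * sigmaC H y :=
  map_mul (Algebra.TensorProduct.map conjQAlg (AlgHom.id ℚ H)) x y

lemma sig_one : sigmaC H (1 : ℂ ⊗[ℚ] H) = 1 :=
  map_one (Algebra.TensorProduct.map conjQAlg (AlgHom.id ℚ H))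

lemma sig_sig (x : ℂ ⊗[ℚ] H) : sigmaC H (sigmaC H x) = x := by
  induction x using TensorProduct.induction_on with
  | zero => simp
  | tmul z a => simp [sig_tmul, Complex.conj_conj]
  | add u v hu hv => simp [map_add, hu, hv]

variable (D : HodgeAlgebraData H)

lemma tC_tmul (z : ℂ) (a : H) : D.tC (z ⊗ₜ[ℚ] a) = z ⊗ₜ[ℚ] (D.t a) := rfl

lemma sig_tC (x : ℂ ⊗[ℚ] H) : sigmaC H (D.tC x) = D.tC (sigmaC H x) := by
  induction x using TensorProduct.induction_on with
  | zero => simp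
  | tmul z a => simp [sig_tmul, tC_tmul]
  | add u v hu hv => simp [map_add, hu, hv]

lemma BC_tmul (z w : ℂ) (a b : H) :
    D.BC (z ⊗ₜ[ℚ] a) (w ⊗ₜ[ℚ] b) = z * w * (D.B a b : ℂ) := by
  have h := D.BC_extends a b
  simp only [inclH, Algebra.TensorProduct.includeRight_apply] at h
  rw [tmul_eq_smul z a, tmul_eq_smul w b]
  simp only [map_smul, LinearMap.smul_apply, smul_eq_mul, h]
  ring

lemma tC_mul (x y : ℂ ⊗[ℚ] H) : D.tC (x * y) = D.tC y * D.tC x := by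
  induction x using TensorProduct.induction_on with
  | zero => simp
  | add u v hu hv => simp only [add_mul, mul_add, map_add, hu, hv]
  | tmul z a =>
    induction y using TensorProduct.induction_on with
    | zero => simp
    | add u v hu hv => simp only [add_mul, mul_add, map_add, hu, hv]
    | tmul w b =>
      simp [Algebra.TensorProduct.tmul_mul_tmul, tC_tmul, D.t_mul, mul_comm]

lemma tC_tC (x : ℂ ⊗[ℚ] H) : D.tC (D.tC x) = x := by
  induction x using TensorProduct.induction_on with
  | zero => simp
  | tmul z a => simp [tC_tmul, D.t_invol]
  | add u v hu hv => simp [map_add, hu, hv]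

lemma adjL (x y z : ℂ ⊗[ℚ] H) : D.BC (x * y) z = D.BC y (D.tC x * z) := by
  induction x using TensorProduct.induction_on with
  | zero => simp
  | add u v hu hv =>
    simp only [add_mul, map_add, LinearMap.add_apply]; rw [hu, hv]
  | tmul zx a =>
    induction y using TensorProduct.induction_on with
    | zero => simp
    | add u v hu hv =>
      simp only [mul_add, add_mul, map_add, LinearMap.add_apply]; rw [hu, hv]
    | tmul zy b =>
      induction z using TensorProduct.induction_on with
      | zero => simp
      | add u v hu hv =>
        simp only [mul_add, map_add]; rw [hu, hv]
      | tmul zz c =>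
        simp only [Algebra.TensorProduct.tmul_mul_tmul, tC_tmul, BC_tmul]
        rw [D.adj_left]; push_cast; ring

lemma adjR (x y z : ℂ ⊗[ℚ] H) : D.BC (x * y) z = D.BC x (z * D.tC y) := by
  induction x using TensorProduct.induction_on with
  | zero => simp
  | add u v hu hv =>
    simp only [add_mul, map_add, LinearMap.add_apply]; rw [hu, hv]
  | tmul zx a =>
    induction y using TensorProduct.induction_on with
    | zero => simp
    | add u v hu hv =>
      simp only [mul_add, add_mul, map_add, LinearMap.add_apply]; rw [hu, hv]
    | tmul zy b =>
      induction z using TensorProduct.induction_on with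
      | zero => simp
      | add u v hu hv =>
    simp only [add_mul, map_add, LinearMap.add_apply]; rw [hu, hv]
      | tmul zz c =>
        simp only [Algebra.TensorProduct.tmul_mul_tmul, tC_tmul, BC_tmul]
        rw [D.adj_right]; push_cast; ring

end
end HodgeAlgebraData
namespace HodgeAlgebraData
section
set_option linter.unusedSectionVars false
variable {H : Type} [Ring H] [Algebra ℚ H] [FiniteDimensional ℚ H] (D : HodgeAlgebraData H)

lemma exists_decomp (x : ℂ ⊗[ℚ] H) :
    ∃ a ∈ D.H20, ∃ b ∈ D.H11, ∃ c ∈ D.H02, x = a + b + c := by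
  have hx : x ∈ D.H20 ⊔ D.H11 ⊔ D.H02 := by rw [D.sup_top]; trivial
  obtain ⟨y, hy, c, hc, rfl⟩ := Submodule.mem_sup.1 hx
  obtain ⟨a, ha, b, hb, rfl⟩ := Submodule.mem_sup.1 hy
  exact ⟨a, ha, b, hb, c, hc, rfl⟩

lemma decomp_unique {a b c : ℂ ⊗[ℚ] H} (ha : a ∈ D.H20) (hb : b ∈ D.H11) (hc : c ∈ D.H02)
    (h : a + b + c = 0) : a = 0 ∧ b = 0 ∧ c = 0 := by
  have ha0 : a = 0 := by
    have h1 : a = -(b + c) := by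
      have h' := h; rw [add_assoc] at h'; exact eq_neg_of_add_eq_zero_left h'
    have h2 : a ∈ D.H20 ⊓ (D.H11 ⊔ D.H02) := by
      refine ⟨ha, ?_⟩
      rw [h1]
      exact Submodule.neg_mem _ (Submodule.add_mem _ (Submodule.mem_sup_left hb)
        (Submodule.mem_sup_right hc))
    rw [D.disj1] at h2; exact h2
  have hb0 : b = 0 := by
    have h1 : b = -c := by
      rw [ha0, zero_add] at h; exact eq_neg_of_add_eq_zero_left h
    have h2 : b ∈ D.H11 ⊓ D.H02 := ⟨hb, by rw [h1]; exact Submodule.neg_mem _ hc⟩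
    rw [D.disj2] at h2; exact h2
  refine ⟨ha0, hb0, ?_⟩
  rw [ha0, hb0] at h; simpa using h

-- bilinear orthogonality
lemma BC_AA {a a' : ℂ ⊗[ℚ] H} (ha : a ∈ D.H20) (ha' : a' ∈ D.H20) : D.BC a a' = 0 := by
  have := D.orth_20_02 a ha (sigmaC H a') (D.sigma_20 a' ha')
  rwa [sig_sig] at this

lemma BC_AB {a b : ℂ ⊗[ℚ] H} (ha : a ∈ D.H20) (hb : b ∈ D.H11) : D.BC a b = 0 := by
  have := D.orth_20_11 a ha (sigmaC H b) (D.sigma_11 b hb)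
  rwa [sig_sig] at this

lemma BC_BA {b a : ℂ ⊗[ℚ] H} (hb : b ∈ D.H11) (ha : a ∈ D.H20) : D.BC b a = 0 := by
  rw [D.BC_symm]; exact D.BC_AB ha hb

lemma BC_BC' {b c : ℂ ⊗[ℚ] H} (hb : b ∈ D.H11) (hc : c ∈ D.H02) : D.BC b c = 0 := by
  have h := D.BC_conj (sigmaC H b) (sigmaC H c)
  rw [sig_sig, sig_sig] at h
  rw [h, D.BC_BA (D.sigma_11 b hb) (D.sigma_02 c hc)]
  simp

lemma BC_CB {c b : ℂ ⊗[ℚ] H} (hc : c ∈ D.H02) (hb : b ∈ D.H11) : D.BC c b = 0 := by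
  rw [D.BC_symm]; exact D.BC_BC' hb hc

lemma BC_CC {c c' : ℂ ⊗[ℚ] H} (hc : c ∈ D.H02) (hc' : c' ∈ D.H02) : D.BC c c' = 0 := by
  have h := D.BC_conj (sigmaC H c) (sigmaC H c')
  rw [sig_sig, sig_sig] at h
  rw [h, D.BC_AA (D.sigma_02 c hc) (D.sigma_02 c' hc')]
  simp

-- nondegeneracy
lemma nondegA {a : ℂ ⊗[ℚ] H} (ha : a ∈ D.H20) (h : ∀ c ∈ D.H02, D.BC a c = 0) : a = 0 := by
  by_contra hne
  have := (D.pos_20 a ha hne).1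
  rw [h _ (D.sigma_20 a ha)] at this
  simp at this

lemma nondegC {c : ℂ ⊗[ℚ] H} (hc : c ∈ D.H02) (h : ∀ a ∈ D.H20, D.BC c a = 0) : c = 0 := by
  by_contra hne
  have := (D.pos_02 c hc hne).1
  rw [h _ (D.sigma_02 c hc)] at this
  simp at this

lemma nondegB {b : ℂ ⊗[ℚ] H} (hb : b ∈ D.H11) (h : ∀ b' ∈ D.H11, D.BC b b' = 0) : b = 0 := by
  by_contra hne
  have := (D.neg_11 b hb hne).1
  rw [h _ (D.sigma_11 b hb)] at this
  simp at this

/-- `1 ∈ H^{1,1}`. -/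
lemma one_mem_H11 : (1 : ℂ ⊗[ℚ] H) ∈ D.H11 := by
  obtain ⟨eA, hA, eB, hB, eC, hC, h1⟩ := D.exists_decomp 1
  -- left-multiplication facts
  have lA : ∀ x ∈ D.H20, eC * x = 0 ∧ eB * x = x := by
    intro x hx
    have hx1 : eA * x + eB * x + eC * x = x := by
      have h' : (eA + eB + eC) * x = 1 * x := by rw [← h1]
      rw [one_mul, add_mul, add_mul] at h'; exact h'
    have h20 : eA * x = 0 := D.mul_20_20 eA hA x hx
    rw [h20, zero_add] at hx1
    -- eB * x ∈ H20, eC * x ∈ H11, sum = x ∈ H20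
    have m1 : eB * x - x ∈ D.H20 := Submodule.sub_mem _ (D.mul_11_20 eB hB x hx) hx
    have m2 : eC * x ∈ D.H11 := D.mul_02_20 eC hC x hx
    have := D.decomp_unique m1 m2 (Submodule.zero_mem _)
      (by rw [show eB * x - x + eC * x + 0 = (eB * x + eC * x) - x from by abel, hx1, sub_self])
    exact ⟨this.2.1, sub_eq_zero.mp this.1⟩
  have lB : ∀ x ∈ D.H11, eA * x = 0 ∧ eC * x = 0 := by
    intro x hx
    have hx1 : eA * x + eB * x + eC * x = x := by
      have h' : (eA + eB + eC) * x = 1 * x := by rw [← h1]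
      rw [one_mul, add_mul, add_mul] at h'; exact h'
    have m1 : eA * x ∈ D.H20 := D.mul_20_11 eA hA x hx
    have m2 : eB * x - x ∈ D.H11 := Submodule.sub_mem _ (D.mul_11_11 eB hB x hx) hx
    have m3 : eC * x ∈ D.H02 := D.mul_02_11 eC hC x hx
    have := D.decomp_unique m1 m2 m3
      (by rw [show eA * x + (eB * x - x) + eC * x = (eA * x + eB * x + eC * x) - x from by abel,
        hx1, sub_self])
    exact ⟨this.1, this.2.2⟩
  have lC : ∀ x ∈ D.H02, eA * x = 0 := by
    intro x hx
    have hx1 : eA * x + eB * x + eC * x = x := by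
      have h' : (eA + eB + eC) * x = 1 * x := by rw [← h1]
      rw [one_mul, add_mul, add_mul] at h'; exact h'
    have h02 : eC * x = 0 := D.mul_02_02 eC hC x hx
    rw [h02, add_zero] at hx1
    have m1 : eA * x ∈ D.H11 := D.mul_20_02 eA hA x hx
    have m2 : eB * x - x ∈ D.H02 := Submodule.sub_mem _ (D.mul_11_02 eB hB x hx) hx
    have := D.decomp_unique (Submodule.zero_mem _) m1 m2
      (by rw [show (0:ℂ ⊗[ℚ] H) + eA * x + (eB * x - x) = (eA * x + eB * x) - x from by abel,
        hx1, sub_self])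
    exact this.2.1
  have heA : eA = 0 := by
    have : eA * 1 = 0 := by
      rw [h1, mul_add, mul_add, D.mul_20_20 eA hA eA hA, (lB eB hB).1, lC eC hC]
      simp
    simpa using this
  have heC : eC = 0 := by
    have : eC * 1 = 0 := by
      rw [h1, mul_add, mul_add, (lA eA hA).1, (lB eB hB).2, D.mul_02_02 eC hC eC hC]
      simp
    simpa using this
  rw [heA, heC] at h1
  have : (1 : ℂ ⊗[ℚ] H) = eB := by simpa using h1
  rw [this]; exact hB

end
end HodgeAlgebraData
namespace HodgeAlgebraData
section
set_option linter.unusedSectionVars false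
variable {H : Type} [Ring H] [Algebra ℚ H] [FiniteDimensional ℚ H] (D : HodgeAlgebraData H)

lemma BC_one_t (x z : ℂ ⊗[ℚ] H) : D.BC (D.tC x) z = D.BC 1 (x * z) := by
  have h := D.adjL (D.tC x) 1 z
  rw [mul_one, D.tC_tC] at h
  exact h

lemma t_memA {x : ℂ ⊗[ℚ] H} (hx : x ∈ D.H20) : D.tC x ∈ D.H20 := by
  obtain ⟨u, hu, v, hv, w, hw, hd⟩ := D.exists_decomp (D.tC x)
  have hw0 : w = 0 := by
    refine D.nondegC hw (fun z hz => ?_)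
    have h := D.BC_one_t x z
    rw [D.mul_20_20 x hx z hz, map_zero, hd] at h
    have e : D.BC (u + v + w) z = D.BC w z := by
      rw [map_add, map_add, LinearMap.add_apply, LinearMap.add_apply,
        D.BC_AA hu hz, D.BC_BA hv hz, zero_add, zero_add]
    rw [e] at h; exact h
  have hv0 : v = 0 := by
    refine D.nondegB hv (fun z hz => ?_)
    have h := D.BC_one_t x z
    rw [hd] at h
    have e : D.BC (u + v + w) z = D.BC v z := by
      rw [map_add, map_add, LinearMap.add_apply, LinearMap.add_apply,
        D.BC_AB hu hz, D.BC_CB hw hz, zero_add, add_zero]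
    rw [e] at h
    rw [h, D.BC_BA D.one_mem_H11 (D.mul_20_11 x hx z hz)]
  rw [hd, hv0, hw0, add_zero, add_zero]; exact hu

lemma t_memB {x : ℂ ⊗[ℚ] H} (hx : x ∈ D.H11) : D.tC x ∈ D.H11 := by
  obtain ⟨u, hu, v, hv, w, hw, hd⟩ := D.exists_decomp (D.tC x)
  have hw0 : w = 0 := by
    refine D.nondegC hw (fun z hz => ?_)
    have h := D.BC_one_t x z
    rw [hd] at h
    have e : D.BC (u + v + w) z = D.BC w z := by
      rw [map_add, map_add, LinearMap.add_apply, LinearMap.add_apply,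
        D.BC_AA hu hz, D.BC_BA hv hz, zero_add, zero_add]
    rw [e] at h
    rw [h, D.BC_BA D.one_mem_H11 (D.mul_11_20 x hx z hz)]
  have hu0 : u = 0 := by
    refine D.nondegA hu (fun z hz => ?_)
    have h := D.BC_one_t x z
    rw [hd] at h
    have e : D.BC (u + v + w) z = D.BC u z := by
      rw [map_add, map_add, LinearMap.add_apply, LinearMap.add_apply,
        D.BC_BC' hv hz, D.BC_CC hw hz, add_zero, add_zero]
    rw [e] at h
    rw [h, D.BC_BC' D.one_mem_H11 (D.mul_11_02 x hx z hz)]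
  rw [hd, hu0, hw0, zero_add, add_zero]; exact hv

lemma t_memC {x : ℂ ⊗[ℚ] H} (hx : x ∈ D.H02) : D.tC x ∈ D.H02 := by
  obtain ⟨u, hu, v, hv, w, hw, hd⟩ := D.exists_decomp (D.tC x)
  have hu0 : u = 0 := by
    refine D.nondegA hu (fun z hz => ?_)
    have h := D.BC_one_t x z
    rw [hd, D.mul_02_02 x hx z hz, map_zero] at h
    have e : D.BC (u + v + w) z = D.BC u z := by
      rw [map_add, map_add, LinearMap.add_apply, LinearMap.add_apply,
        D.BC_BC' hv hz, D.BC_CC hw hz, add_zero, add_zero]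
    rw [e] at h; exact h
  have hv0 : v = 0 := by
    refine D.nondegB hv (fun z hz => ?_)
    have h := D.BC_one_t x z
    rw [hd] at h
    have e : D.BC (u + v + w) z = D.BC v z := by
      rw [map_add, map_add, LinearMap.add_apply, LinearMap.add_apply,
        D.BC_AB hu hz, D.BC_CB hw hz, zero_add, add_zero]
    rw [e] at h
    rw [h, D.BC_BC' D.one_mem_H11 (D.mul_02_11 x hx z hz)]
  rw [hd, hu0, hv0, zero_add, zero_add]; exact hw

lemma t_surjA {a : ℂ ⊗[ℚ] H} (ha : a ∈ D.H20) : ∃ a' ∈ D.H20, D.tC a' = a :=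
  ⟨D.tC a, D.t_memA ha, D.tC_tC a⟩

end
end HodgeAlgebraData
namespace HodgeAlgebraData
section
set_option linter.unusedSectionVars false
variable {H : Type} [Ring H] [Algebra ℚ H] [FiniteDimensional ℚ H] (D : HodgeAlgebraData H)

lemma U1_le_B : D.H20 * D.H02 ≤ D.H11 := Submodule.mul_le.2 D.mul_20_02
lemma U2_le_B : D.H02 * D.H20 ≤ D.H11 := Submodule.mul_le.2 D.mul_02_20

lemma sigU1 : ∀ m ∈ D.H20 * D.H02, sigmaC H m ∈ D.H02 * D.H20 := by
  intro m hm
  refine Submodule.mul_induction_on hm (fun a ha c hc => ?_) (fun x y hx hy => ?_)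
  · rw [sig_mul]; exact Submodule.mul_mem_mul (D.sigma_20 a ha) (D.sigma_02 c hc)
  · rw [map_add]; exact Submodule.add_mem _ hx hy

lemma sigU2 : ∀ m ∈ D.H02 * D.H20, sigmaC H m ∈ D.H20 * D.H02 := by
  intro m hm
  refine Submodule.mul_induction_on hm (fun c hc a ha => ?_) (fun x y hx hy => ?_)
  · rw [sig_mul]; exact Submodule.mul_mem_mul (D.sigma_02 c hc) (D.sigma_20 a ha)
  · rw [map_add]; exact Submodule.add_mem _ hx hy

lemma A_mul_U1 {a : ℂ ⊗[ℚ] H} (ha : a ∈ D.H20) : ∀ m ∈ D.H20 * D.H02, a * m = 0 := by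
  intro m hm
  refine Submodule.mul_induction_on hm (fun a' ha' c hc => ?_) (fun x y hx hy => ?_)
  · rw [← mul_assoc, D.mul_20_20 a ha a' ha', zero_mul]
  · rw [mul_add, hx, hy, add_zero]

lemma BC_U1U1 : ∀ u ∈ D.H20 * D.H02, ∀ v ∈ D.H20 * D.H02, D.BC u v = 0 := by
  intro u hu
  refine Submodule.mul_induction_on hu (fun a ha c hc => ?_) (fun x y hx hy => ?_)
  · intro v hv
    rw [D.adjL, D.A_mul_U1 (D.t_memA ha) v hv, map_zero]
  · intro v hv
    rw [map_add, LinearMap.add_apply, hx v hv, hy v hv, add_zero]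

lemma U12_zero {m : ℂ ⊗[ℚ] H} (h1 : m ∈ D.H20 * D.H02) (h2 : m ∈ D.H02 * D.H20) : m = 0 := by
  by_contra hne
  have hb : m ∈ D.H11 := D.U1_le_B h1
  have := (D.neg_11 m hb hne).1
  rw [D.BC_U1U1 m h1 (sigmaC H m) (D.sigU2 m h2)] at this
  simp at this

lemma W_eq : D.W = D.H20 ⊔ D.H20 * D.H02 := by
  apply le_antisymm
  · refine Submodule.mul_le.2 (fun a ha x _ => ?_)
    obtain ⟨p, hp, q, hq, r, hr, rfl⟩ := D.exists_decomp x
    rw [mul_add, mul_add]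
    refine Submodule.add_mem _ (Submodule.add_mem _ ?_ ?_) ?_
    · rw [D.mul_20_20 a ha p hp]; exact Submodule.zero_mem _
    · exact Submodule.mem_sup_left (D.mul_20_11 a ha q hq)
    · exact Submodule.mem_sup_right (Submodule.mul_mem_mul ha hr)
  · refine sup_le ?_ (mul_le_mul' le_rfl le_top)
    intro a ha
    rw [show a = a * 1 from (mul_one a).symm]
    exact Submodule.mul_mem_mul ha trivial

lemma goal1 : (D.W.restrictScalars ℚ) ⊓ D.sigmaW = ⊥ := by
  rw [eq_bot_iff]
  rintro x hx
  obtain ⟨hxW, hxσ⟩ := Submodule.mem_inf.1 hx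
  rw [Submodule.restrictScalars_mem] at hxW
  obtain ⟨y, hyW, rfl⟩ := Submodule.mem_map.1 hxσ
  rw [Submodule.restrictScalars_mem] at hyW
  rw [D.W_eq] at hxW hyW
  obtain ⟨q, hq, m1, hm1, hx1⟩ := Submodule.mem_sup.1 hxW
  obtain ⟨p, hp, m', hm', hy1⟩ := Submodule.mem_sup.1 hyW
  have hxσ2 : sigmaC H y = sigmaC H p + sigmaC H m' := by rw [← hy1, map_add]
  have hc : sigmaC H p ∈ D.H02 := D.sigma_20 p hp
  have hm2 : sigmaC H m' ∈ D.H02 * D.H20 := D.sigU1 m' hm'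
  have heq : q + m1 = sigmaC H p + sigmaC H m' := by rw [hx1, hxσ2]
  have hzero : q + (m1 - sigmaC H m') + (-(sigmaC H p)) = 0 := by
    rw [show q + (m1 - sigmaC H m') + (-(sigmaC H p))
        = (q + m1) - (sigmaC H p + sigmaC H m') from by abel, heq, sub_self]
  obtain ⟨hq0, hm0, _⟩ := D.decomp_unique hq
    (Submodule.sub_mem _ (D.U1_le_B hm1) (D.U2_le_B hm2))
    (Submodule.neg_mem _ hc) hzero
  have hmm : m1 = sigmaC H m' := sub_eq_zero.mp hm0
  have : m1 = 0 := D.U12_zero hm1 (hmm ▸ hm2)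
  rw [Submodule.mem_bot, ← hx1, hq0, this, add_zero]

end
end HodgeAlgebraData
namespace HodgeAlgebraData
section
set_option linter.unusedSectionVars false
variable {H : Type} [Ring H] [Algebra ℚ H] [FiniteDimensional ℚ H] (D : HodgeAlgebraData H)

/-- The "defect" predicate: elements of `H11` annihilated by `H20` on both sides. -/
def Zp (z : ℂ ⊗[ℚ] H) : Prop :=
  z ∈ D.H11 ∧ (∀ a ∈ D.H20, a * z = 0) ∧ (∀ a ∈ D.H20, z * a = 0)

lemma U_le_B : D.H20 * D.H02 ⊔ D.H02 * D.H20 ≤ D.H11 := sup_le D.U1_le_B D.U2_le_B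

lemma BC_refl : D.BC.IsRefl := fun x y h => by rw [D.BC_symm]; exact h

lemma sigU : ∀ u ∈ D.H20 * D.H02 ⊔ D.H02 * D.H20,
    sigmaC H u ∈ D.H20 * D.H02 ⊔ D.H02 * D.H20 := by
  intro u hu
  obtain ⟨m1, hm1, m2, hm2, rfl⟩ := Submodule.mem_sup.1 hu
  rw [map_add]
  exact Submodule.add_mem _ (Submodule.mem_sup_right (D.sigU1 _ hm1))
    (Submodule.mem_sup_left (D.sigU2 _ hm2))

lemma restrict_nondeg :
    (LinearMap.BilinForm.restrict D.BC (D.H20 * D.H02 ⊔ D.H02 * D.H20)).Nondegenerate := by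
  refine (LinearMap.IsRefl.nondegenerate_iff_separatingLeft (fun x y h => ?_)).2 ?_
  · exact D.BC_refl _ _ h
  rintro ⟨u, hu⟩ h
  have hz : ∀ v ∈ D.H20 * D.H02 ⊔ D.H02 * D.H20, D.BC u v = 0 := by
    intro v hv
    simpa using h ⟨v, hv⟩
  have h0 : D.BC u (sigmaC H u) = 0 := hz _ (D.sigU u hu)
  have hu0 : u = 0 := by
    by_contra hne
    have := (D.neg_11 u (D.U_le_B hu) hne).1
    rw [h0] at this; simp at this
  exact Subtype.ext hu0

lemma isCompl_orth :
    IsCompl (D.H20 * D.H02 ⊔ D.H02 * D.H20)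
      (LinearMap.BilinForm.orthogonal D.BC (D.H20 * D.H02 ⊔ D.H02 * D.H20)) :=
  (LinearMap.BilinForm.restrict_nondegenerate_iff_isCompl_orthogonal D.BC_refl).1
    D.restrict_nondeg

lemma O1 {z : ℂ ⊗[ℚ] H}
    (ho : z ∈ LinearMap.BilinForm.orthogonal D.BC (D.H20 * D.H02 ⊔ D.H02 * D.H20))
    (hb : z ∈ D.H11) : D.Zp z := by
  have horth : ∀ u ∈ D.H20 * D.H02 ⊔ D.H02 * D.H20, D.BC u z = 0 := by
    intro u hu
    exact (LinearMap.BilinForm.mem_orthogonal_iff.1 ho) u hu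
  have hl : ∀ a ∈ D.H20, D.tC a * z = 0 := by
    intro a ha
    refine D.nondegA (D.mul_20_11 _ (D.t_memA ha) z hb) (fun c hc => ?_)
    rw [D.BC_symm, ← D.adjL]
    exact horth _ (Submodule.mem_sup_left (Submodule.mul_mem_mul ha hc))
  have hr : ∀ a ∈ D.H20, z * D.tC a = 0 := by
    intro a ha
    refine D.nondegA (D.mul_11_20 z hb _ (D.t_memA ha)) (fun c hc => ?_)
    rw [D.BC_symm, ← D.adjR]
    exact horth _ (Submodule.mem_sup_right (Submodule.mul_mem_mul hc ha))
  refine ⟨hb, fun a ha => ?_, fun a ha => ?_⟩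
  · obtain ⟨a', ha', rfl⟩ := D.t_surjA ha
    exact hl a' ha'
  · obtain ⟨a', ha', rfl⟩ := D.t_surjA ha
    exact hr a' ha'

lemma Zp_annC {z : ℂ ⊗[ℚ] H} (hz : D.Zp z) :
    ∀ c ∈ D.H02, z * c = 0 ∧ c * z = 0 := by
  intro c hc
  constructor
  · refine D.nondegC (D.mul_11_02 z hz.1 c hc) (fun a ha => ?_)
    have h1 : D.tC z * a = 0 := by
      have : D.tC (D.tC a * z) = D.tC z * a := by
        rw [D.tC_mul, D.tC_tC]
      rw [← this, hz.2.1 _ (D.t_memA ha), map_zero]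
    rw [D.adjL, h1, map_zero]
  · refine D.nondegC (D.mul_02_11 c hc z hz.1) (fun a ha => ?_)
    have h1 : a * D.tC z = 0 := by
      have : D.tC (z * D.tC a) = a * D.tC z := by
        rw [D.tC_mul, D.tC_tC]
      rw [← this, hz.2.2 _ (D.t_memA ha), map_zero]
    rw [D.adjR, h1, map_zero]

lemma Zp_t {z : ℂ ⊗[ℚ] H} (hz : D.Zp z) : D.Zp (D.tC z) := by
  refine ⟨D.t_memB hz.1, fun a ha => ?_, fun a ha => ?_⟩
  · have : D.tC (z * D.tC a) = a * D.tC z := by rw [D.tC_mul, D.tC_tC]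
    rw [← this, hz.2.2 _ (D.t_memA ha), map_zero]
  · have : D.tC (D.tC a * z) = D.tC z * a := by rw [D.tC_mul, D.tC_tC]
    rw [← this, hz.2.1 _ (D.t_memA ha), map_zero]

lemma Zp_mul {z : ℂ ⊗[ℚ] H} (hz : D.Zp z) (x : ℂ ⊗[ℚ] H) :
    D.Zp (x * z) ∧ D.Zp (z * x) := by
  obtain ⟨p, hp, q, hq, r, hr, rfl⟩ := D.exists_decomp x
  have hpz : p * z = 0 := hz.2.1 p hp
  have hrz : r * z = 0 := (D.Zp_annC hz r hr).2
  have hzp : z * p = 0 := hz.2.2 p hp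
  have hzr : z * r = 0 := (D.Zp_annC hz r hr).1
  constructor
  · have hxz : (p + q + r) * z = q * z := by rw [add_mul, add_mul, hpz, hrz, zero_add, add_zero]
    rw [hxz]
    refine ⟨D.mul_11_11 q hq z hz.1, fun a ha => ?_, fun a ha => ?_⟩
    · rw [← mul_assoc]
      exact hz.2.1 _ (D.mul_20_11 a ha q hq)
    · rw [mul_assoc]
      rw [hz.2.2 a ha, mul_zero]
  · have hxz : z * (p + q + r) = z * q := by rw [mul_add, mul_add, hzp, hzr, zero_add, add_zero]
    rw [hxz]
    refine ⟨D.mul_11_11 z hz.1 q hq, fun a ha => ?_, fun a ha => ?_⟩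
    · rw [← mul_assoc, hz.2.1 a ha, zero_mul]
    · rw [mul_assoc]
      exact hz.2.2 _ (D.mul_11_20 q hq a ha)

lemma Zp_mul_U_right {z : ℂ ⊗[ℚ] H} (hz : D.Zp z) :
    ∀ u ∈ D.H20 * D.H02 ⊔ D.H02 * D.H20, z * u = 0 := by
  intro u hu
  obtain ⟨m1, hm1, m2, hm2, rfl⟩ := Submodule.mem_sup.1 hu
  have h1 : z * m1 = 0 := by
    refine Submodule.mul_induction_on hm1 (fun a ha c hc => ?_) (fun x y hx hy => ?_)
    · rw [← mul_assoc, hz.2.2 a ha, zero_mul]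
    · rw [mul_add, hx, hy, add_zero]
  have h2 : z * m2 = 0 := by
    refine Submodule.mul_induction_on hm2 (fun c hc a ha => ?_) (fun x y hx hy => ?_)
    · rw [← mul_assoc, (D.Zp_annC hz c hc).1, zero_mul]
    · rw [mul_add, hx, hy, add_zero]
  rw [mul_add, h1, h2, add_zero]

lemma Zp_mul_U_left {z : ℂ ⊗[ℚ] H} (hz : D.Zp z) :
    ∀ u ∈ D.H20 * D.H02 ⊔ D.H02 * D.H20, u * z = 0 := by
  intro u hu
  obtain ⟨m1, hm1, m2, hm2, rfl⟩ := Submodule.mem_sup.1 hu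
  have h1 : m1 * z = 0 := by
    refine Submodule.mul_induction_on hm1 (fun a ha c hc => ?_) (fun x y hx hy => ?_)
    · rw [mul_assoc, (D.Zp_annC hz c hc).2, mul_zero]
    · rw [add_mul, hx, hy, add_zero]
  have h2 : m2 * z = 0 := by
    refine Submodule.mul_induction_on hm2 (fun c hc a ha => ?_) (fun x y hx hy => ?_)
    · rw [mul_assoc, hz.2.1 a ha, mul_zero]
    · rw [add_mul, hx, hy, add_zero]
  rw [add_mul, h1, h2, add_zero]

end
end HodgeAlgebraData
namespace HodgeAlgebraData
section
set_option linter.unusedSectionVars false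
variable {H : Type} [Ring H] [Algebra ℚ H] [FiniteDimensional ℚ H]

/-- Coordinate equivalence for `ℂ ⊗[ℚ] H` coming from a `ℚ`-basis of `ℂ`. -/
noncomputable def EE : ℂ ⊗[ℚ] H ≃ₗ[ℚ] (Module.Basis.ofVectorSpaceIndex ℚ ℂ →₀ H) :=
  (TensorProduct.congr (Module.Basis.ofVectorSpace ℚ ℂ).repr (LinearEquiv.refl ℚ H)).trans
    (TensorProduct.finsuppScalarLeft ℚ H _)

lemma EE_tmul (z : ℂ) (m : H) (i : Module.Basis.ofVectorSpaceIndex ℚ ℂ) :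
    EE (z ⊗ₜ[ℚ] m) i = (Module.Basis.ofVectorSpace ℚ ℂ).repr z i • m := by
  simp [EE, TensorProduct.congr_tmul]

lemma EE_symm_single (i : Module.Basis.ofVectorSpaceIndex ℚ ℂ) (m : H) :
    EE.symm (Finsupp.single i m) = (Module.Basis.ofVectorSpace ℚ ℂ i : ℂ) ⊗ₜ[ℚ] m := by
  simp only [EE, LinearEquiv.trans_symm, LinearEquiv.trans_apply,
    TensorProduct.finsuppScalarLeft_symm_apply_single]
  rw [TensorProduct.congr_symm_tmul]
  congr 1

variable (D : HodgeAlgebraData H)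

lemma EE_mulR (x : ℂ ⊗[ℚ] H) (b : H) (i : Module.Basis.ofVectorSpaceIndex ℚ ℂ) :
    EE (x * inclH H b) i = EE x i * b := by
  induction x using TensorProduct.induction_on with
  | zero => simp
  | add u v hu hv => rw [add_mul, map_add, Finsupp.add_apply, hu, hv, map_add,
      Finsupp.add_apply, add_mul]
  | tmul z a =>
    rw [show inclH H b = (1:ℂ) ⊗ₜ[ℚ] b from rfl, Algebra.TensorProduct.tmul_mul_tmul,
      mul_one, EE_tmul, EE_tmul, smul_mul_assoc]

lemma EE_mulL (x : ℂ ⊗[ℚ] H) (b : H) (i : Module.Basis.ofVectorSpaceIndex ℚ ℂ) :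
    EE (inclH H b * x) i = b * EE x i := by
  induction x using TensorProduct.induction_on with
  | zero => simp
  | add u v hu hv => rw [mul_add, map_add, Finsupp.add_apply, hu, hv, map_add,
      Finsupp.add_apply, mul_add]
  | tmul z a =>
    rw [show inclH H b = (1:ℂ) ⊗ₜ[ℚ] b from rfl, Algebra.TensorProduct.tmul_mul_tmul,
      one_mul, EE_tmul, EE_tmul, mul_smul_comm]

lemma EE_t (x : ℂ ⊗[ℚ] H) (i : Module.Basis.ofVectorSpaceIndex ℚ ℂ) :
    EE (D.tC x) i = D.t (EE x i) := by
  induction x using TensorProduct.induction_on with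
  | zero => simp
  | add u v hu hv => simp [map_add, Finsupp.add_apply, hu, hv]
  | tmul z a => rw [tC_tmul, EE_tmul, EE_tmul, map_smul]

lemma center_lemma
    (hcenter : {a : H | (∀ b : H, a * b = b * a) ∧ D.t a = a} =
      {a : H | ∃ q : ℚ, a = q • (1 : H)})
    {x : ℂ ⊗[ℚ] H} (hc : ∀ b : H, x * inclH H b = inclH H b * x)
    (ht : D.tC x = x) : ∃ μ : ℂ, x = μ • 1 := by
  classical
  have hxi : ∀ i, ∃ q : ℚ, EE x i = q • (1 : H) := by
    intro i
    have h1 : ∀ b : H, EE x i * b = b * EE x i := by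
      intro b
      have h := congrArg (fun y => EE y i) (hc b)
      simpa only [EE_mulR, EE_mulL] using h
    have h2 : D.t (EE x i) = EE x i := by
      rw [← D.EE_t, ht]
    have : EE x i ∈ {a : H | (∀ b : H, a * b = b * a) ∧ D.t a = a} := ⟨h1, h2⟩
    rw [hcenter] at this
    exact this
  choose q hq using hxi
  set f := EE (H := H) x with hf
  have hsum : (f.sum Finsupp.single) = ∑ i ∈ f.support, Finsupp.single i (f i) := rfl
  have hx : x = EE.symm (∑ i ∈ f.support, Finsupp.single i (f i)) := by
    rw [← hsum, Finsupp.sum_single]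
    exact (EE.symm_apply_apply x).symm
  rw [map_sum] at hx
  have hterm : ∀ i ∈ f.support,
      EE.symm (Finsupp.single i (f i)) = (q i • (Module.Basis.ofVectorSpace ℚ ℂ i : ℂ)) • (1 : ℂ ⊗[ℚ] H) := by
    intro i _
    rw [hq i, EE_symm_single]
    rw [show ((Module.Basis.ofVectorSpace ℚ ℂ i : ℂ)) ⊗ₜ[ℚ] ((q i) • (1:H))
        = ((q i) • (Module.Basis.ofVectorSpace ℚ ℂ i : ℂ)) ⊗ₜ[ℚ] (1:H) from (TensorProduct.smul_tmul _ _ _).symm]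
    rw [tmul_eq_smul, ← Algebra.TensorProduct.one_def]
  refine ⟨∑ i ∈ f.support, q i • (Module.Basis.ofVectorSpace ℚ ℂ i : ℂ), ?_⟩
  rw [hx, Finset.sum_congr rfl hterm, ← Finset.sum_smul]

end
end HodgeAlgebraData

/-- Assume `H^{2,0} ≠ 0` and that the `t`-invariant part of the center of `H`
is trivial: `{a ∈ H : ab = ba for all b, t(a) = a} = ℚ·1`. Then `H_ℂ = W ⊕ σ(W)`. -/
theorem complex_structure_of_trivial_center (D : HodgeAlgebraData H)
    (h20 : D.H20 ≠ ⊥)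
    (hcenter : {a : H | (∀ b : H, a * b = b * a) ∧ D.t a = a} =
      {a : H | ∃ q : ℚ, a = q • (1 : H)}) :
    (D.W.restrictScalars ℚ) ⊓ D.sigmaW = ⊥ ∧
      (D.W.restrictScalars ℚ) ⊔ D.sigmaW = ⊤ := by
  classical
  refine ⟨D.goal1, ?_⟩
  obtain ⟨s, hs, e, he, hse⟩ := Submodule.mem_sup.1
    (show (1 : ℂ ⊗[ℚ] H) ∈ _ ⊔ _ from by rw [D.isCompl_orth.sup_eq_top]; trivial)
  have heB : e ∈ D.H11 := by
    have h1 : e = 1 - s := by rw [← hse]; abel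
    rw [h1]; exact Submodule.sub_mem _ D.one_mem_H11 (D.U_le_B hs)
  have hZe : D.Zp e := D.O1 he heB
  have unitR : ∀ z, D.Zp z → z * e = z := by
    intro z hz
    have h0 : z * s = 0 := D.Zp_mul_U_right hz s hs
    calc z * e = z * (s + e) := by rw [mul_add, h0, zero_add]
    _ = z := by rw [hse, mul_one]
  have unitL : ∀ z, D.Zp z → e * z = z := by
    intro z hz
    have h0 : s * z = 0 := D.Zp_mul_U_left hz s hs
    calc e * z = (s + e) * z := by rw [add_mul, h0, zero_add]
    _ = z := by rw [hse, one_mul]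
  have tmulZ : ∀ z, D.Zp z → D.tC e * z = z := by
    intro z hz
    have hw : D.Zp (D.tC z) := D.Zp_t hz
    have h1 : D.tC (D.tC z * e) = D.tC e * z := by rw [D.tC_mul, D.tC_tC]
    rw [← h1, unitR _ hw, D.tC_tC]
  have hte : D.tC e = e := by
    have h1 : D.tC e = D.tC e * e := (unitR _ (D.Zp_t hZe)).symm
    rw [h1, tmulZ e hZe]
  have hcen : ∀ x, e * x = x * e := by
    intro x
    have h1 : (e * x) * e = e * x := unitR _ (D.Zp_mul hZe x).2
    have h2 : e * (x * e) = x * e := unitL _ (D.Zp_mul hZe x).1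
    rw [← h1, mul_assoc, h2]
  obtain ⟨μ, hμ⟩ := D.center_lemma hcenter (fun b => hcen (inclH H b)) hte
  by_cases hμ0 : μ = 0
  · have he0 : e = 0 := by rw [hμ, hμ0, zero_smul]
    have hBU : D.H11 ≤ D.H20 * D.H02 ⊔ D.H02 * D.H20 := by
      intro b hb
      obtain ⟨u, hu, o, ho, huo⟩ := Submodule.mem_sup.1
        (show b ∈ _ ⊔ _ from by rw [D.isCompl_orth.sup_eq_top]; trivial)
      have hoB : o ∈ D.H11 := by
        have h1 : o = b - u := by rw [← huo]; abel
        rw [h1]; exact Submodule.sub_mem _ hb (D.U_le_B hu)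
      have hZo : D.Zp o := D.O1 ho hoB
      have ho0 : o = 0 := by
        have h2 := unitR o hZo
        rw [he0, mul_zero] at h2; exact h2.symm
      rw [← huo, ho0, add_zero]; exact hu
    rw [eq_top_iff]
    intro x _
    obtain ⟨p, hp, q, hq, r, hr, rfl⟩ := D.exists_decomp x
    refine Submodule.add_mem _ (Submodule.add_mem _ ?_ ?_) ?_
    · apply Submodule.mem_sup_left
      rw [Submodule.restrictScalars_mem, D.W_eq]
      exact Submodule.mem_sup_left hp
    · obtain ⟨m1, hm1, m2, hm2, rfl⟩ := Submodule.mem_sup.1 (hBU hq)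
      refine Submodule.add_mem _ ?_ ?_
      · apply Submodule.mem_sup_left
        rw [Submodule.restrictScalars_mem, D.W_eq]
        exact Submodule.mem_sup_right hm1
      · apply Submodule.mem_sup_right
        refine Submodule.mem_map.2 ⟨sigmaC H m2, ?_, HodgeAlgebraData.sig_sig m2⟩
        rw [Submodule.restrictScalars_mem, D.W_eq]
        exact Submodule.mem_sup_right (D.sigU2 m2 hm2)
    · apply Submodule.mem_sup_right
      refine Submodule.mem_map.2 ⟨sigmaC H r, ?_, HodgeAlgebraData.sig_sig r⟩
      rw [Submodule.restrictScalars_mem, D.W_eq]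
      exact Submodule.mem_sup_left (D.sigma_02 r hr)
  · exfalso
    have h1 : (1 : ℂ ⊗[ℚ] H) = μ⁻¹ • e := by
      rw [hμ, smul_smul, inv_mul_cancel₀ hμ0, one_smul]
    have hZ1 : D.Zp (1 : ℂ ⊗[ℚ] H) := by
      rw [h1]
      exact ⟨Submodule.smul_mem _ _ hZe.1,
        fun a ha => by rw [mul_smul_comm, hZe.2.1 a ha, smul_zero],
        fun a ha => by rw [smul_mul_assoc, hZe.2.2 a ha, smul_zero]⟩
    obtain ⟨a, ha, hane⟩ := (Submodule.ne_bot_iff _).1 h20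
    have h2 := hZ1.2.1 a ha
    rw [mul_one] at h2
    exact hane h2
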